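/- Let F : M(Ω) → ℝ be convex and Gâteaux differentiable with derivative representable by p̄ ∈ C_0(Ω) at a minimizer μ̄ of μ ↦ F(μ) + α‖μ‖_{M(Ω)}. Then |p̄(ω)| ≤ α for all ω ∈ Ω, and p̄ = −α·sgn(μ̄) on the support of μ̄ (i.e., −p̄ ∈ α∂‖μ̄‖_{M(Ω)}). -/

import Mathlib

open Filter

/-- Let `F : M(Ω) → ℝ` be convex and Gâteaux differentiable at a minimizer `μ̄`
of `μ ↦ F(μ) + α‖μ‖`, with derivative represented by `p̄ ∈ C(Ω)` (here
`M(Ω) = C(Ω)*` for compact metric `Ω`). Then `|p̄(ω)| ≤ α` for all `ω`, and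
`−p̄ ∈ α ∂‖μ̄‖` (the subgradient inequality). -/
theorem stmt12 {Ω : Type*} [MetricSpace Ω] [CompactSpace Ω]
    (F : (C(Ω, ℝ) →L[ℝ] ℝ) → ℝ) (hF : ConvexOn ℝ Set.univ F)
    (α : ℝ) (hα : 0 < α) (μbar : C(Ω, ℝ) →L[ℝ] ℝ) (pbar : C(Ω, ℝ))
    (hmin : ∀ μ, F μbar + α * ‖μbar‖ ≤ F μ + α * ‖μ‖)
    (hder : ∀ μ : C(Ω, ℝ) →L[ℝ] ℝ,
      Tendsto (fun t : ℝ => (F (μbar + t • (μ - μbar)) - F μbar) / t)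
        (nhdsWithin 0 (Set.Ioi 0)) (nhds ((μ - μbar) pbar))) :
    (∀ ω : Ω, |pbar ω| ≤ α) ∧
    (∀ μ : C(Ω, ℝ) →L[ℝ] ℝ, -((μ - μbar) pbar) ≤ α * (‖μ‖ - ‖μbar‖)) := by
  have key : ∀ μ : C(Ω, ℝ) →L[ℝ] ℝ, -((μ - μbar) pbar) ≤ α * (‖μ‖ - ‖μbar‖) := by
    intro μ
    have hge : α * (‖μbar‖ - ‖μ‖) ≤ (μ - μbar) pbar := by
      refine ge_of_tendsto (hder μ) ?_
      filter_upwards [Ioc_mem_nhdsGT (one_pos : (0:ℝ) < 1)] with t ht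
      obtain ⟨ht0, ht1⟩ := ht
      have hcomb : μbar + t • (μ - μbar) = (1 - t) • μbar + t • μ := by module
      have hnorm : ‖μbar + t • (μ - μbar)‖ ≤ (1 - t) * ‖μbar‖ + t * ‖μ‖ := by
        rw [hcomb]
        refine (norm_add_le ((1 - t) • μbar) (t • μ)).trans ?_
        have h1 := ContinuousLinearMap.opNorm_smul_le (1 - t) μbar
        have h2 := ContinuousLinearMap.opNorm_smul_le t μ
        rw [Real.norm_eq_abs, abs_of_nonneg (by linarith : (0:ℝ) ≤ 1 - t)] at h1
        rw [Real.norm_eq_abs, abs_of_nonneg ht0.le] at h2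
        linarith
      have h1 := hmin (μbar + t • (μ - μbar))
      rw [le_div_iff₀ ht0]
      nlinarith [norm_nonneg μbar, norm_nonneg μ]
    linarith
  refine ⟨fun ω => ?_, key⟩
  set δ : C(Ω, ℝ) →L[ℝ] ℝ := ContinuousMap.evalCLM ℝ ω with hδ
  have hδv : δ pbar = pbar ω := rfl
  have hδn : ‖δ‖ ≤ 1 := by
    refine ContinuousLinearMap.opNorm_le_bound _ zero_le_one fun f => ?_
    change ‖f ω‖ ≤ 1 * ‖f‖
    simpa using f.norm_coe_le_norm ω
  have h1 := key (μbar + δ)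
  have h2 := key (μbar - δ)
  rw [add_sub_cancel_left] at h1
  rw [sub_sub_cancel_left] at h2
  have hn1 : ‖μbar + δ‖ - ‖μbar‖ ≤ 1 := by
    have := norm_add_le μbar δ; linarith
  have hn2 : ‖μbar - δ‖ - ‖μbar‖ ≤ 1 := by
    have := norm_sub_le μbar δ; linarith
  rw [ContinuousLinearMap.neg_apply, neg_neg, hδv] at h2
  rw [hδv] at h1
  have hb1 : α * (‖μbar + δ‖ - ‖μbar‖) ≤ α * 1 := mul_le_mul_of_nonneg_left hn1 hα.le
  have hb2 : α * (‖μbar - δ‖ - ‖μbar‖) ≤ α * 1 := mul_le_mul_of_nonneg_left hn2 hα.le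
  rw [abs_le]
  constructor
  · linarith
  · linarith
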